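/- Let W ∈ ℝ^{n×n} be symmetric doubly stochastic, η > 0, W_η := I − η(I − W), ρ_η := ‖W_η − (1/n)𝟙𝟙ᵀ‖ with 0 < ρ_η < 1, w₁ := 1 + ρ_η², w₂ := 1 − ρ_η². Let ω ≥ 0, and let Y, H, Ỹ, G, G⁺ be square-integrable random n×m matrices with E[‖Y − Ỹ‖²] ≤ ω·E[‖Y − H‖²]. Set Y⁺ := W_η·Y + (G⁺ − G) + η(I − W)(Y − Ỹ). Then E[‖Y⁺ − Ȳ⁺‖²] ≤ (w₁/2)·E[‖Y − Ȳ‖²] + (2w₁/w₂)·E[‖G⁺ − G‖²] + (8w₁η²ω/w₂)·E[‖Y − H‖²]. -/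

import Mathlib

open MeasureTheory Finset

/-- Squared Frobenius norm of a real matrix. -/
def frobSq {n m : ℕ} (M : Matrix (Fin n) (Fin m) ℝ) : ℝ := ∑ i, ∑ j, (M i j) ^ 2

/-- The matrix each of whose rows is the average of the rows of `M`. -/
noncomputable def rowAvg {n m : ℕ} (M : Matrix (Fin n) (Fin m) ℝ) :
    Matrix (Fin n) (Fin m) ℝ :=
  Matrix.of fun _ j => (n : ℝ)⁻¹ * ∑ i, M i j

/-- Spectral norm (ℓ²-operator norm) of a real square matrix. -/
noncomputable def specNorm {n : ℕ} (M : Matrix (Fin n) (Fin n) ℝ) : ℝ :=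
  ‖Matrix.toEuclideanCLM (𝕜 := ℝ) M‖

section Aux

variable {n m : ℕ}

lemma frobSq_nonneg (M : Matrix (Fin n) (Fin m) ℝ) : 0 ≤ frobSq M :=
  Finset.sum_nonneg fun _ _ => Finset.sum_nonneg fun _ _ => sq_nonneg _

lemma frobSq_young {s : ℝ} (hs : 0 < s) (A B : Matrix (Fin n) (Fin m) ℝ) :
    frobSq (A + B) ≤ (1 + s) * frobSq A + (1 + 1/s) * frobSq B := by
  have h : ∀ a b : ℝ, (a + b)^2 ≤ (1+s)*a^2 + (1+1/s)*b^2 := by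
    intro a b
    have ht : s * (1/s) = 1 := by field_simp
    nlinarith [sq_nonneg (s*a - b), hs, sq_nonneg (a+b)]
  calc frobSq (A+B) = ∑ i, ∑ j, (A i j + B i j)^2 := by
        simp [frobSq, Matrix.add_apply]
  _ ≤ ∑ i, ∑ j, ((1+s)*(A i j)^2 + (1+1/s)*(B i j)^2) := by
        refine Finset.sum_le_sum fun i _ => Finset.sum_le_sum fun j _ => h _ _
  _ = (1+s)*frobSq A + (1+1/s)*frobSq B := by
        simp [frobSq, Finset.sum_add_distrib, Finset.mul_sum]

lemma frobSq_add_two (A B : Matrix (Fin n) (Fin m) ℝ) :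
    frobSq (A + B) ≤ 2 * frobSq A + 2 * frobSq B := by
  have := frobSq_young (s := 1) one_pos A B
  norm_num at this
  linarith

lemma frobSq_neg (A : Matrix (Fin n) (Fin m) ℝ) : frobSq (-A) = frobSq A := by
  simp [frobSq]

lemma frobSq_sub_le (A B : Matrix (Fin n) (Fin m) ℝ) :
    frobSq (A - B) ≤ 2 * frobSq A + 2 * frobSq B := by
  have := frobSq_add_two A (-B)
  rw [frobSq_neg] at this
  simpa [sub_eq_add_neg] using this

lemma frobSq_smul (c : ℝ) (A : Matrix (Fin n) (Fin m) ℝ) :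
    frobSq (c • A) = c^2 * frobSq A := by
  simp [frobSq, Matrix.smul_apply, smul_eq_mul, mul_pow, Finset.mul_sum]

lemma rowAvg_eq (M : Matrix (Fin n) (Fin m) ℝ) :
    rowAvg M = (Matrix.of fun _ _ => (n:ℝ)⁻¹ : Matrix (Fin n) (Fin n) ℝ) * M := by
  ext i j
  simp [rowAvg, Matrix.mul_apply, Finset.mul_sum]

lemma frobSq_sub_rowAvg_le (hn : 0 < n) (M : Matrix (Fin n) (Fin m) ℝ) :
    frobSq (M - rowAvg M) ≤ frobSq M := by
  have key : ∀ x : Fin n → ℝ, ∑ i, (x i - (n:ℝ)⁻¹ * ∑ k, x k)^2 ≤ ∑ i, (x i)^2 := by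
    intro x
    set c : ℝ := (n:ℝ)⁻¹ * ∑ k, x k with hc
    have hsum : ∑ k, x k = (n:ℝ) * c := by
      rw [hc]
      field_simp
    have hexp : ∑ i, (x i - c)^2 = ∑ i, (x i)^2 - (n:ℝ) * c^2 := by
      have : ∀ i : Fin n, (x i - c)^2 = (x i)^2 - 2*c*(x i) + c^2 := fun i => by ring
      simp only [this]
      rw [Finset.sum_add_distrib, Finset.sum_sub_distrib, ← Finset.mul_sum, hsum,
        Finset.sum_const, Finset.card_univ, Fintype.card_fin, nsmul_eq_mul]
      ring
    rw [hexp]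
    have hnR : (0:ℝ) < n := Nat.cast_pos.mpr hn
    nlinarith [sq_nonneg c]
  calc frobSq (M - rowAvg M) = ∑ j, ∑ i, (M i j - (n:ℝ)⁻¹ * ∑ k, M k j)^2 := by
        rw [frobSq, Finset.sum_comm]
        simp [rowAvg, Matrix.sub_apply]
  _ ≤ ∑ j, ∑ i, (M i j)^2 := Finset.sum_le_sum fun j _ => key _
  _ = frobSq M := by rw [frobSq, Finset.sum_comm]

lemma frobSq_mulVec_le (A : Matrix (Fin n) (Fin n) ℝ) (x : Fin n → ℝ) :
    ∑ i, (A.mulVec x i)^2 ≤ specNorm A ^ 2 * ∑ i, (x i)^2 := by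
  have hnorm : ∀ v : Fin n → ℝ, ‖(WithLp.equiv 2 (Fin n → ℝ)).symm v‖^2 = ∑ i, (v i)^2 := by
    intro v
    simp only [EuclideanSpace.norm_eq, WithLp.equiv_symm_apply, WithLp.ofLp_toLp, Real.norm_eq_abs, sq_abs]
    rw [Real.sq_sqrt (Finset.sum_nonneg fun _ _ => sq_nonneg _)]
  have h := (Matrix.toEuclideanCLM (𝕜 := ℝ) A).le_opNorm ((WithLp.equiv 2 (Fin n → ℝ)).symm x)
  rw [WithLp.equiv_symm_apply, Matrix.toEuclideanCLM_toLp] at h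
  calc ∑ i, (A.mulVec x i)^2
      = ‖(WithLp.equiv 2 (Fin n → ℝ)).symm (A.mulVec x)‖^2 := (hnorm _).symm
  _ ≤ (specNorm A * ‖(WithLp.equiv 2 (Fin n → ℝ)).symm x‖)^2 := by
      exact pow_le_pow_left₀ (norm_nonneg _) h 2
  _ = specNorm A ^2 * ∑ i, (x i)^2 := by rw [mul_pow, hnorm]

lemma frobSq_mul_le (A : Matrix (Fin n) (Fin n) ℝ) (M : Matrix (Fin n) (Fin m) ℝ) :
    frobSq (A * M) ≤ specNorm A ^ 2 * frobSq M := by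
  have h : ∀ j, ∑ i, ((A*M) i j)^2 ≤ specNorm A ^2 * ∑ i, (M i j)^2 := by
    intro j
    have := frobSq_mulVec_le A (fun i => M i j)
    simpa [Matrix.mul_apply, Matrix.mulVec, dotProduct] using this
  calc frobSq (A*M) = ∑ j, ∑ i, ((A*M) i j)^2 := by rw [frobSq, Finset.sum_comm]
  _ ≤ ∑ j, specNorm A ^2 * ∑ i, (M i j)^2 := Finset.sum_le_sum fun j _ => h j
  _ = specNorm A ^2 * frobSq M := by rw [← Finset.mul_sum, frobSq, Finset.sum_comm]


variable {n m : ℕ}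

lemma colbound (W : Matrix (Fin n) (Fin n) ℝ) (hWnn : ∀ i j, 0 ≤ W i j)
    (hWrow : ∀ i, ∑ j, W i j = 1) (hWcol : ∀ j, ∑ i, W i j = 1) (e : Fin n → ℝ) :
    ∑ i, ∑ k, W i k * (e i - e k)^2 ≤ 4 * ∑ i, (e i)^2 := by
  have h1 : ∑ i, ∑ k, W i k * (e i - e k)^2
      ≤ ∑ i, ∑ k, W i k * (2*(e i)^2 + 2*(e k)^2) := by
    refine Finset.sum_le_sum fun i _ => Finset.sum_le_sum fun k _ => ?_
    have : (e i - e k)^2 ≤ 2*(e i)^2 + 2*(e k)^2 := by nlinarith [sq_nonneg (e i + e k)]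
    exact mul_le_mul_of_nonneg_left this (hWnn i k)
  have h2 : ∑ i, ∑ k, W i k * (2*(e i)^2 + 2*(e k)^2)
      = (∑ i, ∑ k, W i k * (2*(e i)^2)) + ∑ i, ∑ k, W i k * (2*(e k)^2) := by
    simp [mul_add, Finset.sum_add_distrib]
  have h3 : ∑ i, ∑ k, W i k * (2*(e i)^2) = ∑ i, 2*(e i)^2 := by
    refine Finset.sum_congr rfl fun i _ => ?_
    rw [← Finset.sum_mul, hWrow i, one_mul]
  have h4 : ∑ i, ∑ k, W i k * (2*(e k)^2) = ∑ k, 2*(e k)^2 := by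
    rw [Finset.sum_comm]
    refine Finset.sum_congr rfl fun k _ => ?_
    rw [← Finset.sum_mul, hWcol k, one_mul]
  have h5 : ∑ i, 2*(e i)^2 = 2 * ∑ i, (e i)^2 := by rw [Finset.mul_sum]
  calc ∑ i, ∑ k, W i k * (e i - e k)^2 ≤ _ := h1
  _ = (∑ i, 2*(e i)^2) + ∑ k, 2*(e k)^2 := by rw [h2, h3, h4]
  _ = 4 * ∑ i, (e i)^2 := by rw [h5]; ring

lemma frobSq_oneSubW (W : Matrix (Fin n) (Fin n) ℝ) (hWnn : ∀ i j, 0 ≤ W i j)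
    (hWrow : ∀ i, ∑ j, W i j = 1) (hWcol : ∀ j, ∑ i, W i j = 1)
    (E : Matrix (Fin n) (Fin m) ℝ) :
    frobSq (((1 : Matrix (Fin n) (Fin n) ℝ) - W) * E) ≤ 4 * frobSq E := by
  have hentry : ∀ i j, (((1 : Matrix (Fin n) (Fin n) ℝ) - W) * E) i j
      = ∑ k, W i k * (E i j - E k j) := by
    intro i j
    have h1 : ∑ k, W i k * (E i j - E k j)
        = (∑ k, W i k) * E i j - ∑ k, W i k * E k j := by
      rw [Finset.sum_mul, ← Finset.sum_sub_distrib]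
      exact Finset.sum_congr rfl fun k _ => by ring
    rw [h1, hWrow i, one_mul, Matrix.sub_mul, Matrix.one_mul, Matrix.sub_apply,
      Matrix.mul_apply]
  have hsq : ∀ i j, ((((1 : Matrix (Fin n) (Fin n) ℝ) - W) * E) i j)^2
      ≤ ∑ k, W i k * (E i j - E k j)^2 := by
    intro i j
    rw [hentry]
    have hcs := Finset.sum_sq_le_sum_mul_sum_of_sq_eq_mul Finset.univ
      (r := fun k => W i k * (E i j - E k j)) (f := fun k => W i k)
      (g := fun k => W i k * (E i j - E k j)^2)
      (fun k _ => hWnn i k) (fun k _ => mul_nonneg (hWnn i k) (sq_nonneg _))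
      (fun k _ => by ring)
    rwa [hWrow i, one_mul] at hcs
  calc frobSq (((1 : Matrix (Fin n) (Fin n) ℝ) - W) * E)
      = ∑ j, ∑ i, ((((1 : Matrix (Fin n) (Fin n) ℝ) - W) * E) i j)^2 := by
        rw [frobSq, Finset.sum_comm]
  _ ≤ ∑ j, ∑ i, ∑ k, W i k * (E i j - E k j)^2 :=
      Finset.sum_le_sum fun j _ => Finset.sum_le_sum fun i _ => hsq i j
  _ ≤ ∑ j, 4 * ∑ i, (E i j)^2 :=
      Finset.sum_le_sum fun j _ => colbound W hWnn hWrow hWcol (fun i => E i j)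
  _ = 4 * frobSq E := by rw [← Finset.mul_sum, frobSq, Finset.sum_comm]

lemma decomp (W : Matrix (Fin n) (Fin n) ℝ) (η : ℝ)
    (Jm : Matrix (Fin n) (Fin n) ℝ)
    (hJWη : Jm * ((1 : Matrix (Fin n) (Fin n) ℝ) - η • (1 - W)) = Jm)
    (hWηJ : ((1 : Matrix (Fin n) (Fin n) ℝ) - η • (1 - W)) * Jm = Jm)
    (hJJ : Jm * Jm = Jm)
    (hJL : Jm * ((1 : Matrix (Fin n) (Fin n) ℝ) - W) = 0)
    (Y D E : Matrix (Fin n) (Fin m) ℝ) :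
    (((1 : Matrix (Fin n) (Fin n) ℝ) - η • (1 - W)) * Y + D + η • ((1 - W) * E))
      - Jm * (((1 : Matrix (Fin n) (Fin n) ℝ) - η • (1 - W)) * Y + D + η • ((1 - W) * E))
    = ((1 : Matrix (Fin n) (Fin n) ℝ) - η • (1 - W) - Jm) * (Y - Jm * Y)
      + ((D - Jm * D) + η • (((1 : Matrix (Fin n) (Fin n) ℝ) - W) * E)) := by
  have h1 : Jm * (((1 : Matrix (Fin n) (Fin n) ℝ) - η • (1 - W)) * Y) = Jm * Y := by
    rw [← Matrix.mul_assoc, hJWη]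
  have h2 : Jm * (η • (((1 : Matrix (Fin n) (Fin n) ℝ) - W) * E)) = 0 := by
    rw [Matrix.mul_smul, ← Matrix.mul_assoc, hJL, Matrix.zero_mul, smul_zero]
  have h3 : ((1 : Matrix (Fin n) (Fin n) ℝ) - η • (1 - W) - Jm) * (Y - Jm * Y)
      = ((1 : Matrix (Fin n) (Fin n) ℝ) - η • (1 - W)) * Y - Jm * Y := by
    rw [Matrix.sub_mul, Matrix.mul_sub, Matrix.mul_sub, ← Matrix.mul_assoc,
      ← Matrix.mul_assoc, hWηJ, hJJ]
    abel
  rw [Matrix.mul_add, Matrix.mul_add, h1, h2, h3]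
  abel

end Aux

/-- Consensus contraction of the compressed gradient-tracking
update: with `W_η = I − η(I − W)`, `ρ_η = ‖W_η − (1/n)𝟙𝟙ᵀ‖ ∈ (0,1)`,
`w₁ = 1 + ρ_η²`, `w₂ = 1 − ρ_η²`, compression error
`E‖Y − Ỹ‖² ≤ ω E‖Y − H‖²`, and `Y⁺ = W_η Y + (G⁺ − G) + η (I − W)(Y − Ỹ)`:
`E‖Y⁺ − Ȳ⁺‖² ≤ (w₁/2) E‖Y − Ȳ‖² + (2w₁/w₂) E‖G⁺ − G‖² + (8w₁η²ω/w₂) E‖Y − H‖²`. -/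
theorem statement11 {n m : ℕ} (hn : 0 < n)
    {Ω : Type*} [MeasurableSpace Ω] (P : Measure Ω) [IsProbabilityMeasure P]
    (W : Matrix (Fin n) (Fin n) ℝ)
    (hWnn : ∀ i j, 0 ≤ W i j) (hWsymm : W.transpose = W)
    (hWrow : ∀ i, ∑ j, W i j = 1)
    (η : ℝ) (hη : 0 < η)
    (ρη : ℝ)
    (hρη : ρη = specNorm ((1 : Matrix (Fin n) (Fin n) ℝ) - η • (1 - W) -
      Matrix.of fun _ _ => (n : ℝ)⁻¹))
    (hρ0 : 0 < ρη) (hρ1 : ρη < 1)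
    (ωc : ℝ) (hωc : 0 ≤ ωc)
    (Y H Ytil G Gp : Ω → Matrix (Fin n) (Fin m) ℝ)
    (hYmeas : ∀ i j, Measurable fun ω => Y ω i j)
    (hHmeas : ∀ i j, Measurable fun ω => H ω i j)
    (hYtmeas : ∀ i j, Measurable fun ω => Ytil ω i j)
    (hGmeas : ∀ i j, Measurable fun ω => G ω i j)
    (hGpmeas : ∀ i j, Measurable fun ω => Gp ω i j)
    (hYint : Integrable (fun ω => frobSq (Y ω)) P)
    (hHint : Integrable (fun ω => frobSq (H ω)) P)
    (hYtint : Integrable (fun ω => frobSq (Ytil ω)) P)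
    (hGint : Integrable (fun ω => frobSq (G ω)) P)
    (hGpint : Integrable (fun ω => frobSq (Gp ω)) P)
    (hcomp : ∫ ω, frobSq (Y ω - Ytil ω) ∂P ≤ ωc * ∫ ω, frobSq (Y ω - H ω) ∂P)
    (Yp : Ω → Matrix (Fin n) (Fin m) ℝ)
    (hYp : ∀ ω, Yp ω = (1 - η • (1 - W)) * Y ω + (Gp ω - G ω) +
      η • ((1 - W) * (Y ω - Ytil ω))) :
    ∫ ω, frobSq (Yp ω - rowAvg (Yp ω)) ∂P ≤
      (1 + ρη ^ 2) / 2 * ∫ ω, frobSq (Y ω - rowAvg (Y ω)) ∂P +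
        2 * (1 + ρη ^ 2) / (1 - ρη ^ 2) * ∫ ω, frobSq (Gp ω - G ω) ∂P +
        8 * (1 + ρη ^ 2) * η ^ 2 * ωc / (1 - ρη ^ 2) *
          ∫ ω, frobSq (Y ω - H ω) ∂P := by
  have hnR : (0:ℝ) < n := Nat.cast_pos.mpr hn
  -- column sums of W
  have hWcol : ∀ j, ∑ i, W i j = 1 := by
    intro j
    have : ∀ i, W i j = W j i := fun i => by
      conv_lhs => rw [← hWsymm, Matrix.transpose_apply]
    simp only [this]
    exact hWrow j
  set Jm : Matrix (Fin n) (Fin n) ℝ := Matrix.of fun _ _ => (n : ℝ)⁻¹ with hJm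
  have hJmApp : ∀ i j, Jm i j = (n : ℝ)⁻¹ := fun i j => rfl
  have hJW : Jm * W = Jm := by
    ext i j
    rw [Matrix.mul_apply]
    simp only [hJmApp]
    rw [← Finset.mul_sum, hWcol j]
    ring
  have hWJ : W * Jm = Jm := by
    ext i j
    rw [Matrix.mul_apply]
    simp only [hJmApp]
    rw [← Finset.sum_mul, hWrow i]
    ring
  have hJJ : Jm * Jm = Jm := by
    ext i j
    rw [Matrix.mul_apply]
    simp only [hJmApp, Finset.sum_const, Finset.card_univ, Fintype.card_fin, nsmul_eq_mul]
    field_simp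
  have hJone : Jm * 1 = Jm := Matrix.mul_one Jm
  have honeJ : (1 : Matrix (Fin n) (Fin n) ℝ) * Jm = Jm := Matrix.one_mul Jm
  have hJL : Jm * ((1 : Matrix (Fin n) (Fin n) ℝ) - W) = 0 := by
    rw [Matrix.mul_sub, hJone, hJW, sub_self]
  have hLJ : ((1 : Matrix (Fin n) (Fin n) ℝ) - W) * Jm = 0 := by
    rw [Matrix.sub_mul, honeJ, hWJ, sub_self]
  have hJWη : Jm * ((1 : Matrix (Fin n) (Fin n) ℝ) - η • (1 - W)) = Jm := by
    rw [Matrix.mul_sub, hJone, Matrix.mul_smul, hJL, smul_zero, sub_zero]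
  have hWηJ : ((1 : Matrix (Fin n) (Fin n) ℝ) - η • (1 - W)) * Jm = Jm := by
    rw [Matrix.sub_mul, honeJ, Matrix.smul_mul, hLJ, smul_zero, sub_zero]
  -- parameters
  have hρsq : (0:ℝ) < ρη^2 := pow_pos hρ0 2
  have hρsq1 : ρη^2 < 1 := by nlinarith
  have h1m : (0:ℝ) < 1 - ρη^2 := by linarith
  set s : ℝ := (1 - ρη^2) / (2 * ρη^2) with hsdef
  have hs : 0 < s := div_pos h1m (by positivity)
  have hs1 : (1 + s) * ρη^2 = (1 + ρη^2)/2 := by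
    rw [hsdef]; field_simp; ring
  have hs2 : 1 + 1/s = (1 + ρη^2)/(1 - ρη^2) := by
    rw [hsdef]; field_simp; ring
  set c₁ : ℝ := (1 + ρη^2)/2 with hc₁
  set c₂ : ℝ := 2*(1 + ρη^2)/(1 - ρη^2) with hc₂
  set c₃ : ℝ := 8*η^2*(1 + ρη^2)/(1 - ρη^2) with hc₃
  have hc₃nn : 0 ≤ c₃ := by
    rw [hc₃]; positivity
  -- pointwise bound
  have hpt : ∀ ω, frobSq (Yp ω - rowAvg (Yp ω)) ≤
      c₁ * frobSq (Y ω - rowAvg (Y ω)) + c₂ * frobSq (Gp ω - G ω)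
        + c₃ * frobSq (Y ω - Ytil ω) := by
    intro ω
    set D := Gp ω - G ω with hD
    set E := Y ω - Ytil ω with hE
    have hrw : Yp ω - rowAvg (Yp ω)
        = ((1 : Matrix (Fin n) (Fin n) ℝ) - η • (1 - W) - Jm) * (Y ω - Jm * Y ω)
          + ((D - Jm * D) + η • (((1 : Matrix (Fin n) (Fin n) ℝ) - W) * E)) := by
      rw [rowAvg_eq, ← hJm, hYp ω]
      exact decomp W η Jm hJWη hWηJ hJJ hJL (Y ω) D E
    have hspec : frobSq (((1 : Matrix (Fin n) (Fin n) ℝ) - η • (1 - W) - Jm)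
        * (Y ω - Jm * Y ω)) ≤ ρη^2 * frobSq (Y ω - rowAvg (Y ω)) := by
      have h := frobSq_mul_le ((1 : Matrix (Fin n) (Fin n) ℝ) - η • (1 - W) - Jm)
        (Y ω - Jm * Y ω)
      rw [rowAvg_eq, ← hJm]
      calc _ ≤ _ := h
      _ = ρη^2 * frobSq (Y ω - Jm * Y ω) := by rw [hρη, hJm]
    have hB : frobSq ((D - Jm * D) + η • (((1 : Matrix (Fin n) (Fin n) ℝ) - W) * E))
        ≤ 2 * frobSq D + 8 * η^2 * frobSq E := by
      have h1 := frobSq_add_two (D - Jm * D)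
        (η • (((1 : Matrix (Fin n) (Fin n) ℝ) - W) * E))
      have h2 : frobSq (D - Jm * D) ≤ frobSq D := by
        have := frobSq_sub_rowAvg_le hn D
        rwa [rowAvg_eq, ← hJm] at this
      have h3 : frobSq (η • (((1 : Matrix (Fin n) (Fin n) ℝ) - W) * E))
          ≤ η^2 * (4 * frobSq E) := by
        rw [frobSq_smul]
        exact mul_le_mul_of_nonneg_left (frobSq_oneSubW W hWnn hWrow hWcol E) (sq_nonneg η)
      calc _ ≤ _ := h1
      _ ≤ 2 * frobSq D + 2 * (η^2 * (4 * frobSq E)) := by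
          have := mul_le_mul_of_nonneg_left h2 (by norm_num : (0:ℝ) ≤ 2)
          have := mul_le_mul_of_nonneg_left h3 (by norm_num : (0:ℝ) ≤ 2)
          linarith [mul_le_mul_of_nonneg_left h2 (by norm_num : (0:ℝ) ≤ 2),
            mul_le_mul_of_nonneg_left h3 (by norm_num : (0:ℝ) ≤ 2)]
      _ = 2 * frobSq D + 8 * η^2 * frobSq E := by ring
    rw [hrw]
    calc frobSq _ ≤ (1+s) * frobSq (((1 : Matrix (Fin n) (Fin n) ℝ) - η • (1 - W) - Jm)
          * (Y ω - Jm * Y ω))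
          + (1+1/s) * frobSq ((D - Jm * D)
            + η • (((1 : Matrix (Fin n) (Fin n) ℝ) - W) * E)) := frobSq_young hs _ _
    _ ≤ (1+s) * (ρη^2 * frobSq (Y ω - rowAvg (Y ω)))
          + (1+1/s) * (2 * frobSq D + 8 * η^2 * frobSq E) := by
        have hp1 : (0:ℝ) ≤ 1 + s := by linarith
        have hp2 : (0:ℝ) ≤ 1 + 1/s := by positivity
        exact add_le_add (mul_le_mul_of_nonneg_left hspec hp1)
          (mul_le_mul_of_nonneg_left hB hp2)
    _ = c₁ * frobSq (Y ω - rowAvg (Y ω)) + c₂ * frobSq D + c₃ * frobSq E := by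
        rw [← mul_assoc, hs1, hs2, hc₁, hc₂, hc₃]
        ring
  -- integrability
  have hmeasSub : ∀ (F K : Ω → Matrix (Fin n) (Fin m) ℝ),
      (∀ i j, Measurable fun ω => F ω i j) → (∀ i j, Measurable fun ω => K ω i j) →
      Measurable fun ω => frobSq (F ω - K ω) := by
    intro F K hF hK
    unfold frobSq
    refine Finset.measurable_sum _ fun i _ => Finset.measurable_sum _ fun j _ => ?_
    have : Measurable fun ω => F ω i j - K ω i j := (hF i j).sub (hK i j)
    simpa [Matrix.sub_apply] using this.pow measurable_const
  have hintSub : ∀ (F K : Ω → Matrix (Fin n) (Fin m) ℝ),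
      (∀ i j, Measurable fun ω => F ω i j) → (∀ i j, Measurable fun ω => K ω i j) →
      Integrable (fun ω => frobSq (F ω)) P → Integrable (fun ω => frobSq (K ω)) P →
      Integrable (fun ω => frobSq (F ω - K ω)) P := by
    intro F K hF hK hFi hKi
    refine Integrable.mono' ((hFi.const_mul 2).add (hKi.const_mul 2))
      (hmeasSub F K hF hK).aestronglyMeasurable
      (Filter.Eventually.of_forall fun ω => ?_)
    rw [Real.norm_eq_abs, abs_of_nonneg (frobSq_nonneg _)]
    exact frobSq_sub_le _ _
  have hInt2 : Integrable (fun ω => frobSq (Gp ω - G ω)) P :=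
    hintSub Gp G hGpmeas hGmeas hGpint hGint
  have hInt3 : Integrable (fun ω => frobSq (Y ω - Ytil ω)) P :=
    hintSub Y Ytil hYmeas hYtmeas hYint hYtint
  have hInt1 : Integrable (fun ω => frobSq (Y ω - rowAvg (Y ω))) P := by
    have hm : Measurable fun ω => frobSq (Y ω - rowAvg (Y ω)) := by
      refine hmeasSub Y (fun ω => rowAvg (Y ω)) hYmeas fun i j => ?_
      have : Measurable fun ω => (n:ℝ)⁻¹ * ∑ k, Y ω k j :=
        measurable_const.mul (Finset.measurable_sum _ fun k _ => hYmeas k j)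
      simpa [rowAvg] using this
    refine Integrable.mono' hYint hm.aestronglyMeasurable
      (Filter.Eventually.of_forall fun ω => ?_)
    rw [Real.norm_eq_abs, abs_of_nonneg (frobSq_nonneg _)]
    exact frobSq_sub_rowAvg_le hn _
  -- integrate
  have hmono : ∫ ω, frobSq (Yp ω - rowAvg (Yp ω)) ∂P ≤
      ∫ ω, (c₁ * frobSq (Y ω - rowAvg (Y ω)) + c₂ * frobSq (Gp ω - G ω)
        + c₃ * frobSq (Y ω - Ytil ω)) ∂P := by
    refine integral_mono_of_nonneg (Filter.Eventually.of_forall fun ω => frobSq_nonneg _)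
      (((hInt1.const_mul c₁).add (hInt2.const_mul c₂)).add (hInt3.const_mul c₃))
      (Filter.Eventually.of_forall fun ω => hpt ω)
  have hsplit : ∫ ω, (c₁ * frobSq (Y ω - rowAvg (Y ω)) + c₂ * frobSq (Gp ω - G ω)
        + c₃ * frobSq (Y ω - Ytil ω)) ∂P
      = c₁ * ∫ ω, frobSq (Y ω - rowAvg (Y ω)) ∂P
        + c₂ * ∫ ω, frobSq (Gp ω - G ω) ∂P
        + c₃ * ∫ ω, frobSq (Y ω - Ytil ω) ∂P := by
    rw [integral_add (f := fun ω => c₁ * frobSq (Y ω - rowAvg (Y ω)) + c₂ * frobSq (Gp ω - G ω))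
      (g := fun ω => c₃ * frobSq (Y ω - Ytil ω))
      ((hInt1.const_mul c₁).add (hInt2.const_mul c₂)) (hInt3.const_mul c₃),
      integral_add (hInt1.const_mul c₁) (hInt2.const_mul c₂),
      integral_const_mul, integral_const_mul, integral_const_mul]
  have hlast : c₃ * ∫ ω, frobSq (Y ω - Ytil ω) ∂P
      ≤ c₃ * (ωc * ∫ ω, frobSq (Y ω - H ω) ∂P) :=
    mul_le_mul_of_nonneg_left hcomp hc₃nn
  calc ∫ ω, frobSq (Yp ω - rowAvg (Yp ω)) ∂P ≤ _ := hmono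
  _ = _ := hsplit
  _ ≤ c₁ * ∫ ω, frobSq (Y ω - rowAvg (Y ω)) ∂P
        + c₂ * ∫ ω, frobSq (Gp ω - G ω) ∂P
        + c₃ * (ωc * ∫ ω, frobSq (Y ω - H ω) ∂P) := by linarith
  _ = (1 + ρη ^ 2) / 2 * ∫ ω, frobSq (Y ω - rowAvg (Y ω)) ∂P
        + 2 * (1 + ρη ^ 2) / (1 - ρη ^ 2) * ∫ ω, frobSq (Gp ω - G ω) ∂P
        + 8 * (1 + ρη ^ 2) * η ^ 2 * ωc / (1 - ρη ^ 2) *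
          ∫ ω, frobSq (Y ω - H ω) ∂P := by
      rw [hc₁, hc₂, hc₃]; ring
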